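/- Let X be a compact metric space, G ⊆ X × X a closed relation, and a, b ∈ X with a ≠ b such that: (1) whenever (x,a) ∈ G then x = a; (2) whenever (b,x) ∈ G then x = b; and (3) whenever (s,u) ∈ G and (t,u) ∈ G with s ≠ t, then {s,t,u} ∩ {a,b} ≠ ∅. Then G is not CR-turbulent. -/
import Mathlib


open Set

/-- The n-th Mahavier product of a relation `F` on `X`: tuples `(x 0, …, x n)`
with `(x i, x (i+1)) ∈ F` for all `i < n`. -/
def Mahavier {X : Type*} (F : Set (X × X)) (n : ℕ) : Set (Fin (n + 1) → X) :=
  {x | ∀ i : Fin n, (x i.castSucc, x i.succ) ∈ F}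

/-- A witness of CR-turbulence at length parameter `n`. -/
def CRWitness {X : Type*} [TopologicalSpace X] (F : Set (X × X)) (n : ℕ) : Prop :=
  ∃ K L : Set (Fin (n + 1) → X),
    K.Nonempty ∧ L.Nonempty ∧ IsClosed K ∧ IsClosed L ∧
    K ⊆ Mahavier F n ∧ L ⊆ Mahavier F n ∧ Disjoint K L ∧
    ((fun x => x 0) '' K ∪ (fun x => x 0) '' L) ⊆
      ((fun x => x (Fin.last n)) '' K ∩ (fun x => x (Fin.last n)) '' L)

/-- A witness of reverse CR-turbulence at length parameter `n`. -/
def RevCRWitness {X : Type*} [TopologicalSpace X] (F : Set (X × X)) (n : ℕ) : Prop :=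
  ∃ K L : Set (Fin (n + 1) → X),
    K.Nonempty ∧ L.Nonempty ∧ IsClosed K ∧ IsClosed L ∧
    K ⊆ Mahavier F n ∧ L ⊆ Mahavier F n ∧ Disjoint K L ∧
    ((fun x => x (Fin.last n)) '' K ∪ (fun x => x (Fin.last n)) '' L) ⊆
      ((fun x => x 0) '' K ∩ (fun x => x 0) '' L)

/-- `F` is CR-turbulent. -/
def CRTurbulent {X : Type*} [TopologicalSpace X] (F : Set (X × X)) : Prop :=
  ∃ n : ℕ, 1 ≤ n ∧ CRWitness F n

/-- `F` is reverse CR-turbulent. -/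
def RevCRTurbulent {X : Type*} [TopologicalSpace X] (F : Set (X × X)) : Prop :=
  ∃ n : ℕ, 1 ≤ n ∧ RevCRWitness F n

/-- A self-map is separated turbulent. -/
def SepTurbulent {Z : Type*} [TopologicalSpace Z] (h : Z → Z) : Prop :=
  ∃ K L : Set Z, K.Nonempty ∧ L.Nonempty ∧ IsClosed K ∧ IsClosed L ∧
    Disjoint K L ∧ K ∪ L ⊆ h '' K ∩ h '' L

/-- A self-map is turbulent. -/
def Turbulent {Z : Type*} [TopologicalSpace Z] (h : Z → Z) : Prop :=
  ∃ K L : Set Z, K.Nonempty ∧ L.Nonempty ∧ IsClosed K ∧ IsClosed L ∧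
    (K ∩ L).Subsingleton ∧ K ∪ L ⊆ h '' K ∩ h '' L

/-- The infinite Mahavier product `X_F^+`. -/
def MahavierSeq {X : Type*} (F : Set (X × X)) : Set (ℕ → X) :=
  {x | ∀ i : ℕ, (x i, x (i + 1)) ∈ F}

/-- The shift map `σ_F^+` on `X_F^+`. -/
def shiftMap {X : Type*} (F : Set (X × X)) : MahavierSeq F → MahavierSeq F :=
  fun x => ⟨fun n => x.1 (n + 1), fun i => x.2 (i + 1)⟩

/-- If `G` is a closed relation on a compact metric space `X` and `a ≠ b`
are points of `X` such that (1) `(x,a) ∈ G → x = a`, (2) `(b,x) ∈ G → x = b`, and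
(3) `(s,u), (t,u) ∈ G` with `s ≠ t` implies `{s,t,u} ∩ {a,b} ≠ ∅`, then `G` is not
CR-turbulent. -/
lemma mah_suffix {X : Type*} {G : Set (X × X)} {b : X} (h2 : ∀ x, (b, x) ∈ G → x = b)
    {n : ℕ} {p : Fin (n + 1) → X} (hp : p ∈ Mahavier G n)
    {j : Fin (n + 1)} (hj : p j = b) : ∀ i : Fin (n + 1), j ≤ i → p i = b := by
  have key : ∀ m : ℕ, ∀ hm : (j : ℕ) + m < n + 1, p ⟨(j : ℕ) + m, hm⟩ = b := by
    intro m
    induction m with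
    | zero => intro hm; simpa using hj
    | succ m ih =>
      intro hm
      have hm' : (j : ℕ) + m < n + 1 := by omega
      have hmn : (j : ℕ) + m < n := by omega
      have := hp ⟨(j : ℕ) + m, hmn⟩
      have hcast : (⟨(j : ℕ) + m, hmn⟩ : Fin n).castSucc = ⟨(j : ℕ) + m, hm'⟩ := by
        ext; simp
      have hsucc : (⟨(j : ℕ) + m, hmn⟩ : Fin n).succ = ⟨(j : ℕ) + m + 1, hm⟩ := by
        ext; simp
      rw [hcast, hsucc, ih hm'] at this
      exact h2 _ this
  intro i hi
  have hi' : (i : ℕ) = (j : ℕ) + ((i : ℕ) - (j : ℕ)) := by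
    have := (Fin.le_def.mp hi); omega
  have hlt : (j : ℕ) + ((i : ℕ) - (j : ℕ)) < n + 1 := by rw [← hi']; exact i.isLt
  have := key _ hlt
  convert this using 2
  ext; simp [← hi']

lemma mah_prefix {X : Type*} {G : Set (X × X)} {a : X} (h1 : ∀ x, (x, a) ∈ G → x = a)
    {n : ℕ} {p : Fin (n + 1) → X} (hp : p ∈ Mahavier G n)
    {j : Fin (n + 1)} (hj : p j = a) : ∀ i : Fin (n + 1), i ≤ j → p i = a := by
  have key : ∀ m : ℕ, m ≤ (j : ℕ) → p ⟨(j : ℕ) - m, by omega⟩ = a := by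
    intro m
    induction m with
    | zero => intro _; simpa using hj
    | succ m ih =>
      intro hm
      have hprev := ih (by omega)
      have hlt : (j : ℕ) - (m + 1) < n := by
        have := j.isLt; omega
      have := hp ⟨(j : ℕ) - (m + 1), hlt⟩
      have hcast : (⟨(j : ℕ) - (m + 1), hlt⟩ : Fin n).castSucc
          = ⟨(j : ℕ) - (m + 1), by omega⟩ := by ext; simp
      have hsucc : (⟨(j : ℕ) - (m + 1), hlt⟩ : Fin n).succ
          = ⟨(j : ℕ) - m, by omega⟩ := by ext; simp; omega
      rw [hcast, hsucc, hprev] at this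
      exact h1 _ this
  intro i hi
  have hle : (j : ℕ) - ((j : ℕ) - (i : ℕ)) = (i : ℕ) := by
    have := Fin.le_def.mp hi; omega
  have := key ((j : ℕ) - (i : ℕ)) (by omega)
  convert this using 2
  ext; simp [hle]

theorem stmt9 {X : Type*} [MetricSpace X] [CompactSpace X] {G : Set (X × X)}
    (hG : IsClosed G) (a b : X) (hab : a ≠ b)
    (h1 : ∀ x, (x, a) ∈ G → x = a)
    (h2 : ∀ x, (b, x) ∈ G → x = b)
    (h3 : ∀ s t u, (s, u) ∈ G → (t, u) ∈ G → s ≠ t →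
      ({s, t, u} : Set X) ∩ {a, b} ≠ ∅) :
    ¬ CRTurbulent G := by
  classical
  rintro ⟨n, hn, K, L, ⟨k, hkK⟩, ⟨l, hlL⟩, hKc, hLc, hKM, hLM, hd, hsub⟩
  -- per-point claim
  have claim : ∀ x : X, x ∈ ((fun p => p (Fin.last n)) '' K ∩ (fun p => p (Fin.last n)) '' L) →
      x = b ∨ a ∈ ((fun p : Fin (n+1) → X => p 0) '' K ∪ (fun p => p 0) '' L) := by
    rintro x ⟨⟨k', hk'K, hk'x⟩, ⟨l', hl'L, hl'x⟩⟩
    have hk'M := hKM hk'K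
    have hl'M := hLM hl'L
    have hne : k' ≠ l' := by
      rintro rfl; exact Set.disjoint_left.mp hd hk'K hl'L
    set D : Finset (Fin (n+1)) := Finset.univ.filter (fun i => k' i ≠ l' i) with hD
    have hDne : D.Nonempty := by
      by_contra h
      rw [Finset.not_nonempty_iff_eq_empty] at h
      apply hne
      funext i
      by_contra hi
      have : i ∈ D := by simp [hD, hi]
      simp [h] at this
    set j := D.max' hDne with hj
    have hjmem : k' j ≠ l' j := by
      have := D.max'_mem hDne
      simp [hD] at this
      exact this
    have hmax : ∀ i, j < i → k' i = l' i := by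
      intro i hi
      by_contra hcon
      have : i ∈ D := by simp [hD, hcon]
      exact absurd (D.le_max' i this) (not_le.mpr hi)
    have hjlast : j ≠ Fin.last n := by
      intro h
      exact hjmem (h ▸ (hk'x.trans hl'x.symm))
    have hjn : (j : ℕ) < n := by
      have := j.isLt
      have : (j : ℕ) ≠ n := fun h => hjlast (Fin.ext h)
      omega
    set j' : Fin n := ⟨(j : ℕ), hjn⟩ with hj'
    have hcast : j'.castSucc = j := by ext; simp [hj']
    have hsu : j < j'.succ := by
      rw [Fin.lt_def]; simp [hj']
    have hGk := hk'M j'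
    have hGl := hl'M j'
    rw [hcast] at hGk hGl
    have heq : l' j'.succ = k' j'.succ := (hmax _ hsu).symm
    rw [heq] at hGl
    have h3' := h3 _ _ _ hGk hGl hjmem
    obtain ⟨c, hc1, hc2⟩ := Set.nonempty_iff_ne_empty.mpr h3'
    simp only [Set.mem_insert_iff, Set.mem_singleton_iff] at hc1 hc2
    rcases hc2 with hca | hcb
    · -- c = a cases
      rcases hc1 with hs | ht | hu
      · right; left
        refine ⟨k', hk'K, ?_⟩
        exact mah_prefix h1 hk'M (hs.symm.trans hca) 0 (Fin.zero_le _)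
      · right; right
        refine ⟨l', hl'L, ?_⟩
        exact mah_prefix h1 hl'M (ht.symm.trans hca) 0 (Fin.zero_le _)
      · have hua : k' j'.succ = a := hu.symm.trans hca
        exact absurd ((h1 _ (hua ▸ hGk)).trans (h1 _ (hua ▸ hGl)).symm) hjmem
    · -- c = b cases
      rcases hc1 with hs | ht | hu
      · have hub : k' j'.succ = b := h2 _ ((hs.symm.trans hcb) ▸ hGk)
        left
        rw [← hk'x]
        exact mah_suffix h2 hk'M hub (Fin.last n) (Fin.le_last _)
      · have hub : k' j'.succ = b := h2 _ ((ht.symm.trans hcb) ▸ hGl)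
        left
        rw [← hk'x]
        exact mah_suffix h2 hk'M hub (Fin.last n) (Fin.le_last _)
      · left
        rw [← hk'x]
        exact mah_suffix h2 hk'M (hu.symm.trans hcb) (Fin.last n) (Fin.le_last _)
  -- a cannot be in the first-coordinate projections
  have hano : a ∉ ((fun p : Fin (n+1) → X => p 0) '' K ∪ (fun p => p 0) '' L) := by
    intro ha
    obtain ⟨⟨p, hpK, hpa⟩, ⟨q, hqL, hqa⟩⟩ := hsub ha
    have hp : ∀ i, p i = a := fun i => mah_prefix h1 (hKM hpK) hpa i (Fin.le_last _)
    have hq : ∀ i, q i = a := fun i => mah_prefix h1 (hLM hqL) hqa i (Fin.le_last _)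
    have : p = q := funext fun i => (hp i).trans (hq i).symm
    exact Set.disjoint_left.mp hd hpK (this ▸ hqL)
  have hkb : k 0 = b := by
    rcases claim (k 0) (hsub (Or.inl ⟨k, hkK, rfl⟩)) with h | h
    · exact h
    · exact absurd h hano
  have hlb : l 0 = b := by
    rcases claim (l 0) (hsub (Or.inr ⟨l, hlL, rfl⟩)) with h | h
    · exact h
    · exact absurd h hano
  have hk : ∀ i, k i = b := fun i => mah_suffix h2 (hKM hkK) hkb i (Fin.zero_le _)
  have hl : ∀ i, l i = b := fun i => mah_suffix h2 (hLM hlL) hlb i (Fin.zero_le _)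
  have : k = l := funext fun i => (hk i).trans (hl i).symm
  exact Set.disjoint_left.mp hd hkK (this ▸ hlL)
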